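/- In the reflection equation algebra A_q(M₂): the quantum determinant det_q = u11·u22 − q²·u12·u21 and the quantum trace tr_q = u11 + q^{−2}·u22 are central elements, and u22 is a normal element, i.e. u22·A_q(M₂) = A_q(M₂)·u22. -/

import Mathlib

noncomputable section

open FreeAlgebra MulOpposite

/-- The relations of the reflection equation algebra of rank 2:
`u11·u22 = u22·u11`, `u22·u12 = q²·u12·u22`, `u21·u22 = q²·u22·u21`,
`u11·u12 = u12·(u11 + (q^{−2}−1)·u22)`, `u21·u11 = (u11 + (q^{−2}−1)·u22)·u21`,
`u21·u12 − u12·u21 = (q^{−2}−1)·u22·(u22 − u11)`, where the generators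
`u11, u12, u21, u22` are the images of `0, 1, 2, 3 : Fin 4`. -/
inductive REArel {K : Type*} [Field K] (q : K) :
    FreeAlgebra K (Fin 4) → FreeAlgebra K (Fin 4) → Prop
  | r1 : REArel q (ι K (0 : Fin 4) * ι K (3 : Fin 4)) (ι K (3 : Fin 4) * ι K (0 : Fin 4))
  | r2 : REArel q (ι K (3 : Fin 4) * ι K (1 : Fin 4))
      (q ^ 2 • (ι K (1 : Fin 4) * ι K (3 : Fin 4)))
  | r3 : REArel q (ι K (2 : Fin 4) * ι K (3 : Fin 4))
      (q ^ 2 • (ι K (3 : Fin 4) * ι K (2 : Fin 4)))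
  | r4 : REArel q (ι K (0 : Fin 4) * ι K (1 : Fin 4))
      (ι K (1 : Fin 4) * (ι K (0 : Fin 4) + (q⁻¹ ^ 2 - 1) • ι K (3 : Fin 4)))
  | r5 : REArel q (ι K (2 : Fin 4) * ι K (0 : Fin 4))
      ((ι K (0 : Fin 4) + (q⁻¹ ^ 2 - 1) • ι K (3 : Fin 4)) * ι K (2 : Fin 4))
  | r6 : REArel q (ι K (2 : Fin 4) * ι K (1 : Fin 4))
      (ι K (1 : Fin 4) * ι K (2 : Fin 4) +
        (q⁻¹ ^ 2 - 1) • (ι K (3 : Fin 4) * (ι K (3 : Fin 4) - ι K (0 : Fin 4))))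

/-- The reflection equation algebra `A_q(M₂)` of rank 2: the quotient of the free
`K`-algebra on four generators by the two-sided ideal generated by the relations above. -/
abbrev REA {K : Type*} [Field K] (q : K) := RingQuot (REArel q)

variable {K : Type*} [Field K]

/-- The generator `u11` of `A_q(M₂)`. -/
def u11 (q : K) : REA q := RingQuot.mkAlgHom K (REArel q) (ι K (0 : Fin 4))
/-- The generator `u12` of `A_q(M₂)`. -/
def u12 (q : K) : REA q := RingQuot.mkAlgHom K (REArel q) (ι K (1 : Fin 4))
/-- The generator `u21` of `A_q(M₂)`. -/
def u21 (q : K) : REA q := RingQuot.mkAlgHom K (REArel q) (ι K (2 : Fin 4))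
/-- The generator `u22` of `A_q(M₂)`. -/
def u22 (q : K) : REA q := RingQuot.mkAlgHom K (REArel q) (ι K (3 : Fin 4))

section Aux
variable (q : K)


lemma rel1 : u11 q * u22 q = u22 q * u11 q := by
  simpa [u11, u22] using RingQuot.mkAlgHom_rel K (REArel.r1 (q := q))

lemma rel2 : u22 q * u12 q = q ^ 2 • (u12 q * u22 q) := by
  simpa [u12, u22] using RingQuot.mkAlgHom_rel K (REArel.r2 (q := q))

lemma rel3 : u21 q * u22 q = q ^ 2 • (u22 q * u21 q) := by
  simpa [u21, u22] using RingQuot.mkAlgHom_rel K (REArel.r3 (q := q))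

lemma rel4 : u11 q * u12 q = u12 q * u11 q + (q⁻¹ ^ 2 - 1) • (u12 q * u22 q) := by
  have := RingQuot.mkAlgHom_rel K (REArel.r4 (q := q))
  simp only [map_mul, map_add, map_smul] at this
  simpa [u11, u12, u22, mul_add, mul_smul_comm] using this

lemma rel5 : u21 q * u11 q = u11 q * u21 q + (q⁻¹ ^ 2 - 1) • (u22 q * u21 q) := by
  have := RingQuot.mkAlgHom_rel K (REArel.r5 (q := q))
  simp only [map_mul, map_add, map_smul] at this
  simpa [u11, u21, u22, add_mul, smul_mul_assoc] using this

lemma rel6 : u21 q * u12 q = u12 q * u21 q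
    + (q⁻¹ ^ 2 - 1) • (u22 q * u22 q) - (q⁻¹ ^ 2 - 1) • (u22 q * u11 q) := by
  have := RingQuot.mkAlgHom_rel K (REArel.r6 (q := q))
  simp only [map_mul, map_add, map_smul, map_sub] at this
  simp only [u11, u12, u21, u22, mul_sub, smul_sub] at this ⊢
  rw [this]; abel

-- sorted-form relations; order of generators: u12 < u11 < u22 < u21
lemma sDA : u22 q * u11 q = u11 q * u22 q := (rel1 q).symm
lemma sCB : u21 q * u12 q = u12 q * u21 q
    + (q⁻¹ ^ 2 - 1) • (u22 q * u22 q) - (q⁻¹ ^ 2 - 1) • (u11 q * u22 q) := by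
  rw [rel6, sDA]

lemma sAB' (x : REA q) : u11 q * (u12 q * x)
    = u12 q * (u11 q * x) + (q⁻¹ ^ 2 - 1) • (u12 q * (u22 q * x)) := by
  rw [← mul_assoc, rel4, add_mul, smul_mul_assoc, mul_assoc, mul_assoc]
lemma sDB' (x : REA q) : u22 q * (u12 q * x) = q ^ 2 • (u12 q * (u22 q * x)) := by
  rw [← mul_assoc, rel2, smul_mul_assoc, mul_assoc]
lemma sDA' (x : REA q) : u22 q * (u11 q * x) = u11 q * (u22 q * x) := by
  rw [← mul_assoc, sDA, mul_assoc]
lemma sCD' (x : REA q) : u21 q * (u22 q * x) = q ^ 2 • (u22 q * (u21 q * x)) := by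
  rw [← mul_assoc, rel3, smul_mul_assoc, mul_assoc]
lemma sCA' (x : REA q) : u21 q * (u11 q * x)
    = u11 q * (u21 q * x) + (q⁻¹ ^ 2 - 1) • (u22 q * (u21 q * x)) := by
  rw [← mul_assoc, rel5, add_mul, smul_mul_assoc, mul_assoc, mul_assoc]
lemma sCB' (x : REA q) : u21 q * (u12 q * x) = u12 q * (u21 q * x)
    + (q⁻¹ ^ 2 - 1) • (u22 q * (u22 q * x)) - (q⁻¹ ^ 2 - 1) • (u11 q * (u22 q * x)) := by
  rw [← mul_assoc, sCB, sub_mul, add_mul, smul_mul_assoc, smul_mul_assoc,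
    mul_assoc, mul_assoc, mul_assoc]

example (hq : q ≠ 0) :
    (u11 q + q⁻¹ ^ 2 • u22 q) * u12 q = u12 q * (u11 q + q⁻¹ ^ 2 • u22 q) := by
  simp only [rel2, rel3, rel4, rel5, sCB, sDA, sAB', sDB', sDA', sCD', sCA', sCB',
    mul_add, add_mul, mul_sub, sub_mul, smul_add, smul_sub, smul_smul,
    mul_smul_comm, smul_mul_assoc, mul_assoc]
  match_scalars <;> field_simp <;> ring

lemma central_of (z : REA q)
    (h0 : z * u11 q = u11 q * z) (h1 : z * u12 q = u12 q * z)
    (h2 : z * u21 q = u21 q * z) (h3 : z * u22 q = u22 q * z) :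
    ∀ x : REA q, z * x = x * z := by
  intro x
  obtain ⟨y, rfl⟩ := RingQuot.mkAlgHom_surjective K (REArel q) x
  induction y with
  | grade0 r => rw [AlgHom.commutes]; exact (Algebra.commutes r z).symm
  | grade1 i => fin_cases i; exacts [h0, h1, h2, h3]
  | mul a b ha hb => rw [map_mul, ← mul_assoc, ha, mul_assoc, hb, mul_assoc]
  | add a b ha hb => rw [map_add, mul_add, add_mul, ha, hb]

lemma normal_left (hq : q ≠ 0) : ∀ x : REA q, ∃ y : REA q, u22 q * x = y * u22 q := by
  intro x
  obtain ⟨w, rfl⟩ := RingQuot.mkAlgHom_surjective K (REArel q) x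
  induction w with
  | grade0 r =>
      exact ⟨algebraMap K _ r, by rw [AlgHom.commutes, Algebra.commutes]⟩
  | grade1 i =>
      fin_cases i
      · exact ⟨u11 q, (rel1 q).symm⟩
      · exact ⟨q ^ 2 • u12 q, by show u22 q * u12 q = _; rw [rel2, smul_mul_assoc]⟩
      · refine ⟨q⁻¹ ^ 2 • u21 q, ?_⟩
        show u22 q * u21 q = _
        rw [smul_mul_assoc, rel3, smul_smul, inv_pow,
          inv_mul_cancel₀ (pow_ne_zero 2 hq), one_smul]
      · exact ⟨u22 q, rfl⟩
  | mul a b ha hb =>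
      obtain ⟨ya, ha⟩ := ha; obtain ⟨yb, hb⟩ := hb
      exact ⟨ya * yb, by rw [map_mul, ← mul_assoc, ha, mul_assoc, hb, ← mul_assoc]⟩
  | add a b ha hb =>
      obtain ⟨ya, ha⟩ := ha; obtain ⟨yb, hb⟩ := hb
      exact ⟨ya + yb, by rw [map_add, mul_add, ha, hb, add_mul]⟩

lemma normal_right (hq : q ≠ 0) : ∀ x : REA q, ∃ y : REA q, x * u22 q = u22 q * y := by
  intro x
  obtain ⟨w, rfl⟩ := RingQuot.mkAlgHom_surjective K (REArel q) x
  induction w with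
  | grade0 r =>
      exact ⟨algebraMap K _ r, by rw [AlgHom.commutes, Algebra.commutes]⟩
  | grade1 i =>
      fin_cases i
      · exact ⟨u11 q, rel1 q⟩
      · refine ⟨q⁻¹ ^ 2 • u12 q, ?_⟩
        show u12 q * u22 q = _
        rw [mul_smul_comm, rel2, smul_smul, inv_pow,
          inv_mul_cancel₀ (pow_ne_zero 2 hq), one_smul]
      · exact ⟨q ^ 2 • u21 q, by show u21 q * u22 q = _; rw [rel3, mul_smul_comm]⟩
      · exact ⟨u22 q, rfl⟩
  | mul a b ha hb =>
      obtain ⟨ya, ha⟩ := ha; obtain ⟨yb, hb⟩ := hb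
      exact ⟨ya * yb, by rw [map_mul, mul_assoc, hb, ← mul_assoc, ha, mul_assoc]⟩
  | add a b ha hb =>
      obtain ⟨ya, ha⟩ := ha; obtain ⟨yb, hb⟩ := hb
      exact ⟨ya + yb, by rw [map_add, add_mul, ha, hb, mul_add]⟩


end Aux

/-- In the reflection equation algebra `A_q(M₂)`, the quantum
determinant `det_q = u11·u22 − q²·u12·u21` and the quantum trace `tr_q = u11 + q^{−2}·u22`
are central, and `u22` is a normal element, i.e. `u22·A_q(M₂) = A_q(M₂)·u22`. -/
theorem REA_detq_trq_central_u22_normal (q : K) (hq : q ≠ 0) :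
    (∀ x : REA q, (u11 q * u22 q - q ^ 2 • (u12 q * u21 q)) * x =
        x * (u11 q * u22 q - q ^ 2 • (u12 q * u21 q))) ∧
    (∀ x : REA q, (u11 q + q⁻¹ ^ 2 • u22 q) * x = x * (u11 q + q⁻¹ ^ 2 • u22 q)) ∧
    Set.range (fun a : REA q => u22 q * a) = Set.range (fun a : REA q => a * u22 q) := by
  refine ⟨central_of q _ ?_ ?_ ?_ ?_, central_of q _ ?_ ?_ ?_ ?_, ?n⟩
  case n =>
    apply Set.ext; intro x
    constructor
    · rintro ⟨a, rfl⟩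
      obtain ⟨y, hy⟩ := normal_left q hq a
      exact ⟨y, hy.symm⟩
    · rintro ⟨a, rfl⟩
      obtain ⟨y, hy⟩ := normal_right q hq a
      exact ⟨y, hy.symm⟩
  all_goals
    set_option maxRecDepth 10000 in
    simp only [rel2, rel3, rel4, rel5, sCB, sDA, sAB', sDB', sDA', sCD', sCA', sCB',
      mul_add, add_mul, mul_sub, sub_mul, smul_add, smul_sub, smul_smul,
      mul_smul_comm, smul_mul_assoc, mul_assoc]
  all_goals match_scalars <;> field_simp <;> ring
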